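/- Under the binding α-price-fairness constraint with interior solutions D₁(α) = D₁* - (Δ_p/(2a))α, D₂(α) = D₂* + (Δ_p/(2a))α (Δ_p = (a/2)(D̄₂-D̄₁) > 0, D₁(α) > 0), the social welfare W_SW(α) = Σᵢ[πDᵢ(α) - (1/2)aDᵢ(α)² - (b - a·D̄ᵢ)Dᵢ(α)] has derivative W_SW'(α) = a·(Δ_p/(2a))·(D̄₂ - D̄₁)·(1-α)/2 > 0 for α ∈ [0,1), and the consumer Nash welfare W_CNW(α) = log((1/2)aD₁(α)²) + log((1/2)aD₂(α)²) has derivative W_CNW'(α) = (Δ_p/a)(1/D₂(α) - 1/D₁(α)) < 0 whenever D₁(α) < D₂(α). -/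

import Mathlib

/-- Along the binding α-price-fairness path, social welfare is strictly
increasing on `[0,1)` and consumer Nash welfare is strictly decreasing whenever
`D₁(α) < D₂(α)`. -/
theorem price_fairness_welfare_derivatives
    (a b π Dbar1 Dbar2 : ℝ) (ha : 0 < a) (hDbar12 : Dbar1 < Dbar2)
    (D1s D2s Δp : ℝ)
    (hΔp : Δp = (a / 2) * (Dbar2 - Dbar1))
    (D1 D2 : ℝ → ℝ)
    (hD1 : ∀ α, D1 α = D1s - (Δp / (2*a)) * α)
    (hD2 : ∀ α, D2 α = D2s + (Δp / (2*a)) * α)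
    (WSW WCNW : ℝ → ℝ)
    (hWSW : ∀ α, WSW α = (π * D1 α - (1/2) * a * (D1 α)^2 - (b - a * Dbar1) * D1 α)
                       + (π * D2 α - (1/2) * a * (D2 α)^2 - (b - a * Dbar2) * D2 α))
    (hWCNW : ∀ α, WCNW α = Real.log ((1/2) * a * (D1 α)^2)
                         + Real.log ((1/2) * a * (D2 α)^2))
    (α : ℝ) (hα : α ∈ Set.Ico (0:ℝ) 1)
    (hpos : 0 < D1 α) (hlt : D1 α < D2 α)
    (hgap : D2 α - D1 α = ((Dbar2 - Dbar1) / 2) * (1 + α)) :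
    (HasDerivAt WSW (a * (Δp / (2*a)) * (Dbar2 - Dbar1) * (1 - α) / 2) α ∧
      0 < a * (Δp / (2*a)) * (Dbar2 - Dbar1) * (1 - α) / 2) ∧
    (HasDerivAt WCNW ((Δp / a) * (1 / D2 α - 1 / D1 α)) α ∧
      (Δp / a) * (1 / D2 α - 1 / D1 α) < 0) := by
  obtain ⟨hα0, hα1⟩ := hα
  have haz : a ≠ 0 := ne_of_gt ha
  have hΔppos : 0 < Δp := by rw [hΔp]; nlinarith
  set c : ℝ := Δp / (2*a) with hc
  have hcpos : 0 < c := by positivity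
  -- derivatives of D1, D2 as explicit functions
  have hf1 : HasDerivAt (fun x : ℝ => D1s - c * x) (-c) α := by
    simpa using ((hasDerivAt_id α).const_mul c).const_sub D1s
  have hf2 : HasDerivAt (fun x : ℝ => D2s + c * x) c α := by
    simpa using ((hasDerivAt_id α).const_mul c).const_add D2s
  have hD1α : D1 α = D1s - c * α := hD1 α
  have hD2α : D2 α = D2s + c * α := hD2 α
  have hD1pos : 0 < D1s - c * α := hD1α ▸ hpos
  have hD2pos : 0 < D2s + c * α := by rw [← hD2α]; linarith [hD1α ▸ hlt]
  constructor
  · constructor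
    · have hWSWfun : WSW = fun x => (π * (D1s - c * x) - (1/2) * a * (D1s - c * x)^2
          - (b - a * Dbar1) * (D1s - c * x))
          + (π * (D2s + c * x) - (1/2) * a * (D2s + c * x)^2
          - (b - a * Dbar2) * (D2s + c * x)) := by
        funext x; rw [hWSW x, hD1 x, hD2 x]
      rw [hWSWfun]
      have h1 : HasDerivAt (fun x : ℝ => π * (D1s - c * x) - (1/2) * a * (D1s - c * x)^2
          - (b - a * Dbar1) * (D1s - c * x))
          (π * (-c) - (1/2) * a * (2 * (D1s - c * α)^1 * (-c)) - (b - a * Dbar1) * (-c)) α :=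
        ((hf1.const_mul π).sub ((hf1.pow 2).const_mul ((1/2)*a))).sub (hf1.const_mul _)
      have h2 : HasDerivAt (fun x : ℝ => π * (D2s + c * x) - (1/2) * a * (D2s + c * x)^2
          - (b - a * Dbar2) * (D2s + c * x))
          (π * c - (1/2) * a * (2 * (D2s + c * α)^1 * c) - (b - a * Dbar2) * c) α :=
        ((hf2.const_mul π).sub ((hf2.pow 2).const_mul ((1/2)*a))).sub (hf2.const_mul _)
      have := h1.add h2
      refine this.congr_deriv ?_; symm
      have hgap' : (D2s + c * α) - (D1s - c * α) = ((Dbar2 - Dbar1) / 2) * (1 + α) := by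
        rw [← hD1α, ← hD2α]; exact hgap
      have : a * c * (Dbar2 - Dbar1) * (1 - α) / 2
          = a * c * ((Dbar2 - Dbar1) - ((Dbar2 - Dbar1) / 2) * (1 + α)) := by ring
      rw [this, ← hgap']; ring
    · have h1 : (0:ℝ) < 1 - α := by linarith
      have h2 : (0:ℝ) < Dbar2 - Dbar1 := by linarith
      positivity
  · constructor
    · have hWCNWfun : WCNW = fun x => Real.log ((1/2) * a * (D1s - c * x)^2)
          + Real.log ((1/2) * a * (D2s + c * x)^2) := by
        funext x; rw [hWCNW x, hD1 x, hD2 x]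
      rw [hWCNWfun]
      have hne1 : (1/2) * a * (D1s - c * α)^2 ≠ 0 := by positivity
      have hne2 : (1/2) * a * (D2s + c * α)^2 ≠ 0 := by positivity
      have h1 := (((hf1.pow 2).const_mul ((1/2)*a)).log hne1)
      have h2 := (((hf2.pow 2).const_mul ((1/2)*a)).log hne2)
      have := h1.add h2
      refine this.congr_deriv ?_; symm
      rw [hD1α, hD2α]
      have h2c : Δp / a = 2 * c := by rw [hc]; field_simp
      rw [h2c]
      have hd1 : D1s - c * α ≠ 0 := ne_of_gt hD1pos
      have hd2 : D2s + c * α ≠ 0 := ne_of_gt hD2pos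
      simp only [Pi.pow_apply]
      push_cast
      field_simp
      ring
    · have h1 : 1 / D2 α < 1 / D1 α := one_div_lt_one_div_of_lt hpos hlt
      have h2 : 0 < Δp / a := by positivity
      have : 1 / D2 α - 1 / D1 α < 0 := by linarith
      exact mul_neg_of_pos_of_neg h2 this
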